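/- Every probability measure $Q$ of the form $Q(A) = \int_{\Omega^-}\int_{\Omega^+} \left[\chi_A(\omega_1) \frac{\xi^+(\omega_2)}{\xi^-(\omega_1)+\xi^+(\omega_2)} + \chi_A(\omega_2) \frac{\xi^-(\omega_1)}{\xi^-(\omega_1)+\xi^+(\omega_2)}\right] \alpha(\omega_1, \omega_2) \, d\mu(\omega_1, \omega_2)$, where $\alpha \ge 0$ satisfies $\mu(\alpha > 0) = P(\Omega^+)P(\Omega^-)$, $\int \alpha \frac{\xi^-\xi^+}{\xi^-+\xi^+} d\mu < \infty$, and $\int \alpha \, d\mu = 1$, is equivalent to $P$ and satisfies $E^Q \xi = 0$. -/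

import Mathlib

open MeasureTheory Filter
open scoped ENNReal NNReal

noncomputable def xiPos {Ω : Type*} (ξ : Ω → ℝ) (ω : Ω) : ℝ := max (ξ ω) 0

noncomputable def xiNeg {Ω : Type*} (ξ : Ω → ℝ) (ω : Ω) : ℝ := max (-ξ ω) 0

/-- The product `μ = P⁻ × P⁺` of the restrictions of `P` to `Ω⁻ = {ξ ≤ 0}` and
`Ω⁺ = {ξ > 0}`. -/
noncomputable def prodMeas {Ω : Type*} [MeasurableSpace Ω] (P : Measure Ω) (ξ : Ω → ℝ) :
    Measure (Ω × Ω) :=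
  (P.restrict {ω | ξ ω ≤ 0}).prod (P.restrict {ω | 0 < ξ ω})

/-- The kernel `χ_S(ω₁) ξ⁺(ω₂)/(ξ⁻(ω₁)+ξ⁺(ω₂)) + χ_S(ω₂) ξ⁻(ω₁)/(ξ⁻(ω₁)+ξ⁺(ω₂))`. -/
noncomputable def kern {Ω : Type*} (ξ : Ω → ℝ) (S : Set Ω) (p : Ω × Ω) : ℝ :=
  Set.indicator S (fun _ => (1 : ℝ)) p.1 * (xiPos ξ p.2 / (xiNeg ξ p.1 + xiPos ξ p.2)) +
  Set.indicator S (fun _ => (1 : ℝ)) p.2 * (xiNeg ξ p.1 / (xiNeg ξ p.1 + xiPos ξ p.2))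

/-- The admissibility conditions on the weight `α`. -/
def GoodAlpha {Ω : Type*} [MeasurableSpace Ω] (P : Measure Ω) (ξ : Ω → ℝ)
    (α : Ω × Ω → ℝ) : Prop :=
  Measurable α ∧ (∀ p, 0 ≤ α p) ∧
  prodMeas P ξ {p | 0 < α p} = P {ω | 0 < ξ ω} * P {ω | ξ ω ≤ 0} ∧
  Integrable (fun p => α p * (xiNeg ξ p.1 * xiPos ξ p.2 / (xiNeg ξ p.1 + xiPos ξ p.2)))
    (prodMeas P ξ) ∧
  ∫ p, α p ∂(prodMeas P ξ) = 1

theorem stmt8 {Ω : Type*} [MeasurableSpace Ω] (P Q : Measure Ω)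
    [IsProbabilityMeasure P] [IsProbabilityMeasure Q]
    (ξ : Ω → ℝ) (hmeas : Measurable ξ)
    (h1 : 0 < P {ω | 0 < ξ ω}) (h2 : P {ω | 0 < ξ ω} < 1) (h3 : 0 < P {ω | ξ ω < 0})
    (α : Ω × Ω → ℝ) (hα : GoodAlpha P ξ α)
    (hrep : ∀ S : Set Ω, MeasurableSet S →
      (Q S).toReal = ∫ p, α p * kern ξ S p ∂(prodMeas P ξ)) :
    Q ≪ P ∧ P ≪ Q ∧ Integrable ξ Q ∧ ∫ ω, ξ ω ∂Q = 0 := by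
  obtain ⟨hαm, hαpos, hαsupp, hαint4, hαint1⟩ := hα
  set A : Set Ω := {ω | ξ ω ≤ 0} with hA
  set B : Set Ω := {ω | 0 < ξ ω} with hB
  have mA : MeasurableSet A := measurableSet_le hmeas measurable_const
  have mB : MeasurableSet B := measurableSet_lt measurable_const hmeas
  have mPos : Measurable (xiPos ξ) := hmeas.max measurable_const
  have mNeg : Measurable (xiNeg ξ) := hmeas.neg.max measurable_const
  set μ : Measure (Ω × Ω) := prodMeas P ξ with hμdef
  have hμprod : μ = (P.restrict A).prod (P.restrict B) := rfl
  haveI hfin : IsFiniteMeasure μ := by rw [hμprod]; infer_instance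
  -- basic positivity facts
  have hPosNonneg : ∀ x, 0 ≤ xiPos ξ x := fun x => le_max_right _ _
  have hNegNonneg : ∀ x, 0 ≤ xiNeg ξ x := fun x => le_max_right _ _
  have hdenNonneg : ∀ p : Ω × Ω, 0 ≤ xiNeg ξ p.1 + xiPos ξ p.2 :=
    fun p => add_nonneg (hNegNonneg _) (hPosNonneg _)
  -- the two density functions
  set f1 : Ω × Ω → ℝ := fun p => α p * (xiPos ξ p.2 / (xiNeg ξ p.1 + xiPos ξ p.2)) with hf1def
  set f2 : Ω × Ω → ℝ := fun p => α p * (xiNeg ξ p.1 / (xiNeg ξ p.1 + xiPos ξ p.2)) with hf2def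
  have mf1 : Measurable f1 :=
    hαm.mul ((mPos.comp measurable_snd).div ((mNeg.comp measurable_fst).add (mPos.comp measurable_snd)))
  have mf2 : Measurable f2 :=
    hαm.mul ((mNeg.comp measurable_fst).div ((mNeg.comp measurable_fst).add (mPos.comp measurable_snd)))
  have hf1nonneg : ∀ p, 0 ≤ f1 p := fun p =>
    mul_nonneg (hαpos p) (div_nonneg (hPosNonneg _) (hdenNonneg p))
  have hf2nonneg : ∀ p, 0 ≤ f2 p := fun p =>
    mul_nonneg (hαpos p) (div_nonneg (hNegNonneg _) (hdenNonneg p))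
  have hdiv_le_one : ∀ a b : ℝ, 0 ≤ a → 0 ≤ b → b / (a + b) ≤ 1 := by
    intro a b ha hb
    rcases eq_or_lt_of_le (add_nonneg ha hb) with h | h
    · simp [← h]
    · rw [div_le_one h]; linarith
  have hf1le : ∀ p, f1 p ≤ α p := fun p => by
    have := hdiv_le_one (xiNeg ξ p.1) (xiPos ξ p.2) (hNegNonneg _) (hPosNonneg _)
    calc f1 p ≤ α p * 1 := mul_le_mul_of_nonneg_left this (hαpos p)
    _ = α p := mul_one _
  have hf2le : ∀ p, f2 p ≤ α p := fun p => by
    have := hdiv_le_one (xiPos ξ p.2) (xiNeg ξ p.1) (hPosNonneg _) (hNegNonneg _)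
    rw [add_comm] at this
    calc f2 p ≤ α p * 1 := mul_le_mul_of_nonneg_left this (hαpos p)
    _ = α p := mul_one _
  -- α is integrable
  have hαint : Integrable α μ := by
    by_contra h
    rw [integral_undef h] at hαint1
    exact one_ne_zero hαint1.symm
  have hf1int : Integrable f1 μ :=
    hαint.mono mf1.aestronglyMeasurable (ae_of_all _ fun p => by
      rw [Real.norm_of_nonneg (hf1nonneg p), Real.norm_of_nonneg (hαpos p)]; exact hf1le p)
  have hf2int : Integrable f2 μ :=
    hαint.mono mf2.aestronglyMeasurable (ae_of_all _ fun p => by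
      rw [Real.norm_of_nonneg (hf2nonneg p), Real.norm_of_nonneg (hαpos p)]; exact hf2le p)
  -- a.e. facts
  have haeAB : ∀ᵐ p ∂μ, ξ p.1 ≤ 0 ∧ 0 < ξ p.2 := by
    rw [ae_iff]
    have hsub : {p : Ω × Ω | ¬(ξ p.1 ≤ 0 ∧ 0 < ξ p.2)} ⊆ (Aᶜ ×ˢ Set.univ) ∪ (Set.univ ×ˢ Bᶜ) := by
      intro p hp
      rw [Set.mem_setOf_eq, not_and_or] at hp
      rcases hp with hp | hp
      · exact Or.inl ⟨hp, Set.mem_univ _⟩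
      · exact Or.inr ⟨Set.mem_univ _, hp⟩
    refine measure_mono_null hsub (measure_union_null ?_ ?_)
    · rw [hμprod, Measure.prod_prod, Measure.restrict_apply mA.compl, Set.compl_inter_self,
        measure_empty, zero_mul]
    · rw [hμprod, Measure.prod_prod, Measure.restrict_apply mB.compl, Set.compl_inter_self,
        measure_empty, mul_zero]
  have hμuniv : μ Set.univ = P A * P B := by
    rw [hμprod, ← Set.univ_prod_univ, Measure.prod_prod, Measure.restrict_apply_univ,
      Measure.restrict_apply_univ]
  have hαae : ∀ᵐ p ∂μ, 0 < α p := by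
    rw [ae_iff]
    have hset : {p : Ω × Ω | ¬0 < α p} = {p : Ω × Ω | 0 < α p}ᶜ := rfl
    have hms : MeasurableSet {p : Ω × Ω | 0 < α p} := measurableSet_lt measurable_const hαm
    rw [hset, measure_compl hms (measure_ne_top _ _), hαsupp, hμuniv, mul_comm, tsub_self]
  -- the candidate measure ν
  set m1 : Measure (Ω × Ω) := μ.withDensity (fun p => ((f1 p).toNNReal : ℝ≥0∞)) with hm1
  set m2 : Measure (Ω × Ω) := μ.withDensity (fun p => ((f2 p).toNNReal : ℝ≥0∞)) with hm2
  have hind_norm : ∀ (S : Set Ω) (x : Ω), ‖Set.indicator S (fun _ => (1 : ℝ)) x‖ ≤ 1 := by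
    intro S x; by_cases h : x ∈ S <;> simp [h]
  have hindm : ∀ (S : Set Ω), MeasurableSet S → Measurable (Set.indicator S (fun _ => (1 : ℝ))) :=
    fun S hS => measurable_const.indicator hS
  have hI1 : ∀ (S : Set Ω), MeasurableSet S →
      Integrable (fun p : Ω × Ω => Set.indicator S (fun _ => (1 : ℝ)) p.1 * f1 p) μ := by
    intro S hS
    refine hf1int.mono (((hindm S hS).comp measurable_fst).mul mf1).aestronglyMeasurable
      (ae_of_all _ fun p => ?_)
    rw [norm_mul]
    calc ‖Set.indicator S (fun _ => (1 : ℝ)) p.1‖ * ‖f1 p‖ ≤ 1 * ‖f1 p‖ :=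
          mul_le_mul_of_nonneg_right (hind_norm S p.1) (norm_nonneg _)
      _ = ‖f1 p‖ := one_mul _
  have hI2 : ∀ (S : Set Ω), MeasurableSet S →
      Integrable (fun p : Ω × Ω => Set.indicator S (fun _ => (1 : ℝ)) p.2 * f2 p) μ := by
    intro S hS
    refine hf2int.mono (((hindm S hS).comp measurable_snd).mul mf2).aestronglyMeasurable
      (ae_of_all _ fun p => ?_)
    rw [norm_mul]
    calc ‖Set.indicator S (fun _ => (1 : ℝ)) p.2‖ * ‖f2 p‖ ≤ 1 * ‖f2 p‖ :=
          mul_le_mul_of_nonneg_right (hind_norm S p.2) (norm_nonneg _)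
      _ = ‖f2 p‖ := one_mul _
  have key1 : ∀ S : Set Ω, MeasurableSet S → (m1.map Prod.fst) S =
      ENNReal.ofReal (∫ p, Set.indicator S (fun _ => (1 : ℝ)) p.1 * f1 p ∂μ) := by
    intro S hS
    rw [Measure.map_apply measurable_fst hS, hm1, withDensity_apply _ (measurable_fst hS),
      ofReal_integral_eq_lintegral_ofReal (hI1 S hS) (ae_of_all _ fun p =>
        mul_nonneg (Set.indicator_nonneg (fun _ _ => zero_le_one) _) (hf1nonneg p)),
      ← lintegral_indicator (measurable_fst hS)]
    congr 1
    funext p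
    by_cases h : p.1 ∈ S
    · rw [Set.indicator_of_mem (by exact h), Set.indicator_of_mem h, one_mul]
      rfl
    · rw [Set.indicator_of_notMem (by exact h), Set.indicator_of_notMem h, zero_mul,
        ENNReal.ofReal_zero]
  have key2 : ∀ S : Set Ω, MeasurableSet S → (m2.map Prod.snd) S =
      ENNReal.ofReal (∫ p, Set.indicator S (fun _ => (1 : ℝ)) p.2 * f2 p ∂μ) := by
    intro S hS
    rw [Measure.map_apply measurable_snd hS, hm2, withDensity_apply _ (measurable_snd hS),
      ofReal_integral_eq_lintegral_ofReal (hI2 S hS) (ae_of_all _ fun p =>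
        mul_nonneg (Set.indicator_nonneg (fun _ _ => zero_le_one) _) (hf2nonneg p)),
      ← lintegral_indicator (measurable_snd hS)]
    congr 1
    funext p
    by_cases h : p.2 ∈ S
    · rw [Set.indicator_of_mem (by exact h), Set.indicator_of_mem h, one_mul]
      rfl
    · rw [Set.indicator_of_notMem (by exact h), Set.indicator_of_notMem h, zero_mul,
        ENNReal.ofReal_zero]
  have hQν : Q = m1.map Prod.fst + m2.map Prod.snd := by
    ext S hS
    rw [Measure.add_apply, key1 S hS, key2 S hS,
      ← ENNReal.ofReal_toReal (measure_ne_top Q S), hrep S hS]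
    have hsplit : (fun p => α p * kern ξ S p) = fun p =>
        Set.indicator S (fun _ => (1 : ℝ)) p.1 * f1 p +
        Set.indicator S (fun _ => (1 : ℝ)) p.2 * f2 p := by
      funext p; simp only [kern, hf1def, hf2def]; ring
    rw [hsplit, integral_add (hI1 S hS) (hI2 S hS),
      ENNReal.ofReal_add
        (integral_nonneg fun p => mul_nonneg (Set.indicator_nonneg (fun _ _ => zero_le_one) _) (hf1nonneg p))
        (integral_nonneg fun p => mul_nonneg (Set.indicator_nonneg (fun _ _ => zero_le_one) _) (hf2nonneg p))]
  -- more a.e. facts: positivity of the denominator etc.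
  have hgood : ∀ᵐ p ∂μ, 0 < α p ∧ xiNeg ξ p.1 = -ξ p.1 ∧ xiPos ξ p.2 = ξ p.2 ∧
      0 < xiNeg ξ p.1 + xiPos ξ p.2 ∧ 0 < xiPos ξ p.2 := by
    filter_upwards [haeAB, hαae] with p hp hpα
    have e1 : xiNeg ξ p.1 = -ξ p.1 := max_eq_left (by linarith [hp.1])
    have e2 : xiPos ξ p.2 = ξ p.2 := max_eq_left hp.2.le
    refine ⟨hpα, e1, e2, ?_, ?_⟩
    · have := hNegNonneg p.1; rw [e2]; linarith [hp.2]
    · rw [e2]; exact hp.2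
  -- Q ≪ P
  have habs1 : Q ≪ P := by
    rw [hQν]
    refine Measure.AbsolutelyContinuous.mk fun S hS hPS => ?_
    have hfst : μ (Prod.fst ⁻¹' S) = 0 := by
      rw [hμprod, ← Set.prod_univ, Measure.prod_prod, Measure.restrict_apply hS,
        measure_mono_null Set.inter_subset_left hPS, zero_mul]
    have hsnd : μ (Prod.snd ⁻¹' S) = 0 := by
      rw [hμprod, ← Set.univ_prod, Measure.prod_prod, Measure.restrict_apply hS,
        measure_mono_null Set.inter_subset_left hPS, mul_zero]
    rw [Measure.add_apply, Measure.map_apply measurable_fst hS,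
      Measure.map_apply measurable_snd hS, hm1, hm2,
      withDensity_absolutelyContinuous μ _ hfst,
      withDensity_absolutelyContinuous μ _ hsnd, add_zero]
  -- P ≪ Q
  have habs2 : P ≪ Q := by
    refine Measure.AbsolutelyContinuous.mk fun S hS hQS => ?_
    rw [hQν, Measure.add_apply, add_eq_zero] at hQS
    obtain ⟨hz1, hz2⟩ := hQS
    rw [Measure.map_apply measurable_fst hS, hm1,
      withDensity_apply _ (measurable_fst hS)] at hz1
    rw [Measure.map_apply measurable_snd hS, hm2,
      withDensity_apply _ (measurable_snd hS)] at hz2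
    have hae1 : ∀ᵐ p ∂μ, p ∈ Prod.fst ⁻¹' S → ((f1 p).toNNReal : ℝ≥0∞) = 0 :=
      (setLIntegral_eq_zero_iff (measurable_fst hS)
        mf1.real_toNNReal.coe_nnreal_ennreal).1 hz1
    have hae2 : ∀ᵐ p ∂μ, p ∈ Prod.snd ⁻¹' S → ((f2 p).toNNReal : ℝ≥0∞) = 0 :=
      (setLIntegral_eq_zero_iff (measurable_snd hS)
        mf2.real_toNNReal.coe_nnreal_ennreal).1 hz2
    -- first coordinate is a.e. not in S
    have hnm1 : ∀ᵐ p ∂μ, p ∉ Prod.fst ⁻¹' S := by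
      filter_upwards [hgood, hae1] with p hp hpz hmem
      have := hpz hmem
      rw [ENNReal.coe_eq_zero, Real.toNNReal_eq_zero] at this
      have hposf : 0 < f1 p := mul_pos hp.1 (div_pos hp.2.2.2.2 hp.2.2.2.1)
      exact absurd this (not_le.2 hposf)
    have hSA : P (S ∩ A) = 0 := by
      have : μ (Prod.fst ⁻¹' S) = 0 := measure_eq_zero_iff_ae_notMem.2 hnm1
      rw [hμprod, ← Set.prod_univ, Measure.prod_prod, Measure.restrict_apply hS,
        Measure.restrict_apply_univ, mul_eq_zero] at this
      rcases this with h | h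
      · exact h
      · exact absurd h (ne_of_gt h1)
    -- second coordinate
    have hnm2 : ∀ᵐ p ∂μ, p ∉ ({ω | 0 < xiNeg ξ ω} ×ˢ S : Set (Ω × Ω)) := by
      filter_upwards [hgood, hae2] with p hp hpz hmem
      obtain ⟨hmem1, hmem2⟩ := hmem
      have := hpz hmem2
      rw [ENNReal.coe_eq_zero, Real.toNNReal_eq_zero] at this
      have hposf : 0 < f2 p := mul_pos hp.1 (div_pos hmem1 hp.2.2.2.1)
      exact absurd this (not_le.2 hposf)
    have hSB : P (S ∩ B) = 0 := by
      have hz : μ ({ω | 0 < xiNeg ξ ω} ×ˢ S) = 0 := measure_eq_zero_iff_ae_notMem.2 hnm2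
      rw [hμprod, Measure.prod_prod, Measure.restrict_apply
        (measurableSet_lt measurable_const mNeg), Measure.restrict_apply hS, mul_eq_zero] at hz
      have hset : {ω | 0 < xiNeg ξ ω} ∩ A = {ω | ξ ω < 0} := by
        ext ω
        simp only [Set.mem_inter_iff, Set.mem_setOf_eq, hA, xiNeg, lt_max_iff, lt_self_iff_false,
          or_false, neg_pos]
        exact ⟨fun h => h.1, fun h => ⟨h, h.le⟩⟩
      rcases hz with h | h
      · rw [hset] at h
        exact absurd h (ne_of_gt h3)
      · exact h
    have hcover : S ⊆ (S ∩ A) ∪ (S ∩ B) := by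
      intro ω hω
      rcases le_or_gt (ξ ω) 0 with h | h
      · exact Or.inl ⟨hω, h⟩
      · exact Or.inr ⟨hω, h⟩
    exact le_antisymm (le_trans (measure_mono hcover)
      (le_trans (measure_union_le _ _) (by rw [hSA, hSB, add_zero]))) zero_le
  -- integrability
  have hint1 : Integrable ξ (m1.map Prod.fst) := by
    rw [integrable_map_measure hmeas.aestronglyMeasurable measurable_fst.aemeasurable, hm1,
      integrable_withDensity_iff_integrable_smul mf1.real_toNNReal]
    apply hαint4.neg.congr
    filter_upwards [hgood] with p hp
    show _ = (f1 p).toNNReal • (ξ ∘ Prod.fst) p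
    rw [NNReal.smul_def, Real.coe_toNNReal _ (hf1nonneg p)]
    have hx : ξ p.1 = -xiNeg ξ p.1 := by rw [hp.2.1]; ring
    show -(α p * (xiNeg ξ p.1 * xiPos ξ p.2 / (xiNeg ξ p.1 + xiPos ξ p.2))) = f1 p * ξ p.1
    rw [hf1def, hx]
    ring
  have hint2 : Integrable ξ (m2.map Prod.snd) := by
    rw [integrable_map_measure hmeas.aestronglyMeasurable measurable_snd.aemeasurable, hm2,
      integrable_withDensity_iff_integrable_smul mf2.real_toNNReal]
    apply hαint4.congr
    filter_upwards [hgood] with p hp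
    show _ = (f2 p).toNNReal • (ξ ∘ Prod.snd) p
    rw [NNReal.smul_def, Real.coe_toNNReal _ (hf2nonneg p)]
    show α p * (xiNeg ξ p.1 * xiPos ξ p.2 / (xiNeg ξ p.1 + xiPos ξ p.2)) = f2 p * ξ p.2
    rw [hf2def, ← hp.2.2.1]
    ring
  have hintQ : Integrable ξ Q := by
    rw [hQν]
    exact integrable_add_measure.2 ⟨hint1, hint2⟩
  refine ⟨habs1, habs2, hintQ, ?_⟩
  rw [hQν, integral_add_measure hint1 hint2,
    integral_map measurable_fst.aemeasurable hmeas.aestronglyMeasurable,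
    integral_map measurable_snd.aemeasurable hmeas.aestronglyMeasurable, hm1, hm2,
    integral_withDensity_eq_integral_smul mf1.real_toNNReal _,
    integral_withDensity_eq_integral_smul mf2.real_toNNReal _]
  have e1 : ∫ p, (f1 p).toNNReal • ξ p.1 ∂μ =
      -∫ p, α p * (xiNeg ξ p.1 * xiPos ξ p.2 / (xiNeg ξ p.1 + xiPos ξ p.2)) ∂μ := by
    rw [← integral_neg]
    refine integral_congr_ae ?_
    filter_upwards [hgood] with p hp
    rw [NNReal.smul_def, Real.coe_toNNReal _ (hf1nonneg p)]
    have hx : ξ p.1 = -xiNeg ξ p.1 := by rw [hp.2.1]; ring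
    show f1 p * ξ p.1 = -(α p * (xiNeg ξ p.1 * xiPos ξ p.2 / (xiNeg ξ p.1 + xiPos ξ p.2)))
    rw [hf1def, hx]
    ring
  have e2 : ∫ p, (f2 p).toNNReal • ξ p.2 ∂μ =
      ∫ p, α p * (xiNeg ξ p.1 * xiPos ξ p.2 / (xiNeg ξ p.1 + xiPos ξ p.2)) ∂μ := by
    refine integral_congr_ae ?_
    filter_upwards [hgood] with p hp
    rw [NNReal.smul_def, Real.coe_toNNReal _ (hf2nonneg p)]
    show f2 p * ξ p.2 = α p * (xiNeg ξ p.1 * xiPos ξ p.2 / (xiNeg ξ p.1 + xiPos ξ p.2))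
    rw [hf2def, ← hp.2.2.1]
    ring
  rw [e1, e2]
  ring
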